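/- arXiv:0909.1742 — 3 statements merged into one kernel-verified Lean document; each statement's English description precedes it below -/
import Mathlib

section
/- Let M be a symmetric monoidal category which is a groupoid and in which every translation functor X ⊗ − is faithful. Then for any pairs A = (A⁺, A⁻) and B = (B⁺, B⁻) of objects of M, every morphism in T(A,B) is an isomorphism, and T(A,B) is equivalent to the discrete category on its set of connected components (the quotient of its objects by the equivalence relation generated by the existence of a morphism). In particular the projection from T(A,B) to this discrete category is an equivalence of categories. -/
/-!
STATEMENT 3: Let M be a symmetric monoidal category which is a groupoid and in which every
translation functor X ⊗ − is faithful. Then for any pairs A, B of objects of M, every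
morphism in T(A,B) is an isomorphism, and the projection from T(A,B) to the discrete
category on its set of connected components is an equivalence of categories.
-/

open CategoryTheory MonoidalCategory

universe v u

variable (M : Type u) [Category.{v} M] [MonoidalCategory M] [SymmetricCategory M]

/-- Objects of the category `T(A,B)`: triples `(X, α⁺, α⁻)` with `α^± : A^± ⊗ X ⟶ B^±`. -/
structure TObj (Ap Am Bp Bm : M) : Type (max u v) where
  X : M
  plus : Ap ⊗ X ⟶ Bp
  minus : Am ⊗ X ⟶ Bm

variable {M}

/-- Morphisms of `T(A,B)`: maps `φ : X ⟶ Y` with `β^± ∘ (id ⊗ φ) = α^±`. -/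
@[ext]
structure THom {Ap Am Bp Bm : M} (x y : TObj M Ap Am Bp Bm) : Type v where
  φ : x.X ⟶ y.X
  wp : (𝟙 Ap ⊗ₘ φ) ≫ y.plus = x.plus
  wm : (𝟙 Am ⊗ₘ φ) ≫ y.minus = x.minus

instance {Ap Am Bp Bm : M} : Category (TObj M Ap Am Bp Bm) where
  Hom := THom
  id x := { φ := 𝟙 x.X, wp := by simp, wm := by simp }
  comp {x y z} f g :=
    { φ := f.φ ≫ g.φ
      wp := by rw [← f.wp, ← g.wp]; simp [MonoidalCategory.id_tensorHom]
      wm := by rw [← f.wm, ← g.wm]; simp [MonoidalCategory.id_tensorHom] }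
  id_comp f := THom.ext (by simp)
  comp_id f := THom.ext (by simp)
  assoc f g h := THom.ext (by simp)

/-- The setoid of connected components of `T(A,B)`: the equivalence relation on objects
generated by the existence of a morphism. -/
def componentSetoid (Ap Am Bp Bm : M) : Setoid (TObj M Ap Am Bp Bm) :=
  Relation.EqvGen.setoid (fun x y => Nonempty (x ⟶ y))

/-- The projection from `T(A,B)` to the discrete category on its set of connected
components. -/
def projToComponents (Ap Am Bp Bm : M) :
    TObj M Ap Am Bp Bm ⥤ Discrete (Quotient (componentSetoid Ap Am Bp Bm)) where
  obj x := ⟨Quotient.mk (componentSetoid Ap Am Bp Bm) x⟩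
  map {x y} f := eqToHom (congrArg Discrete.mk
    (Quot.sound (Relation.EqvGen.rel x y ⟨f⟩)))
  map_id := by intros; simp
  map_comp := by intros; simp

/-- Inverse of a `THom`, given that `M` is a groupoid. -/
noncomputable def THom.inv (hgrp : ∀ {x y : M} (f : x ⟶ y), IsIso f)
    {Ap Am Bp Bm : M} {x y : TObj M Ap Am Bp Bm} (f : x ⟶ y) : y ⟶ x := by
  haveI := hgrp f.φ
  exact
  { φ := CategoryTheory.inv f.φ
    wp := by
      rw [← f.wp]
      rw [← Category.assoc, MonoidalCategory.tensorHom_comp_tensorHom]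
      simp
    wm := by
      rw [← f.wm]
      rw [← Category.assoc, MonoidalCategory.tensorHom_comp_tensorHom]
      simp }

theorem THom.isIso (hgrp : ∀ {x y : M} (f : x ⟶ y), IsIso f)
    {Ap Am Bp Bm : M} {x y : TObj M Ap Am Bp Bm} (f : x ⟶ y) : IsIso f := by
  haveI := hgrp f.φ
  refine ⟨THom.inv hgrp f, ?_, ?_⟩
  · exact THom.ext (show f.φ ≫ CategoryTheory.inv f.φ = 𝟙 _ by simp)
  · exact THom.ext (show CategoryTheory.inv f.φ ≫ f.φ = 𝟙 _ by simp)

theorem T_discrete_on_components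
    (hgrp : ∀ {x y : M} (f : x ⟶ y), IsIso f)
    (hfaith : ∀ X : M, (tensorLeft X).Faithful)
    (Ap Am Bp Bm : M) :
    (∀ (x y : TObj M Ap Am Bp Bm) (f : x ⟶ y), IsIso f) ∧
      (projToComponents Ap Am Bp Bm).IsEquivalence := by
  refine ⟨fun x y f => THom.isIso hgrp f, ?_⟩
  have hsub : ∀ (x y : TObj M Ap Am Bp Bm) (f g : x ⟶ y), f = g := by
    intro x y f g
    apply THom.ext
    haveI := hgrp y.plus
    have h1 : (𝟙 Ap ⊗ₘ f.φ) ≫ y.plus = (𝟙 Ap ⊗ₘ g.φ) ≫ y.plus := by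
      rw [f.wp, g.wp]
    have h2 : (𝟙 Ap ⊗ₘ f.φ) = (𝟙 Ap ⊗ₘ g.φ) :=
      (cancel_mono y.plus).mp h1
    rw [MonoidalCategory.id_tensorHom, MonoidalCategory.id_tensorHom] at h2
    exact (hfaith Ap).map_injective h2
  have hconn : ∀ x y : TObj M Ap Am Bp Bm,
      (componentSetoid Ap Am Bp Bm).r x y → Nonempty (x ⟶ y) := by
    intro x y h
    induction h with
    | rel a b hab => exact hab
    | refl a => exact ⟨𝟙 a⟩
    | symm a b _ ih => exact ⟨THom.inv hgrp ih.some⟩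
    | trans a b c _ _ ih1 ih2 => exact ⟨ih1.some ≫ ih2.some⟩
  haveI : (projToComponents (M := M) Ap Am Bp Bm).Faithful :=
    ⟨fun {x y f g} _ => hsub x y f g⟩
  haveI : (projToComponents (M := M) Ap Am Bp Bm).Full := by
    constructor
    intro x y f
    obtain ⟨⟨h⟩⟩ := f
    obtain ⟨g⟩ := hconn x y (Quotient.exact h)
    exact ⟨g, Subsingleton.elim _ _⟩
  haveI : (projToComponents (M := M) Ap Am Bp Bm).EssSurj := by
    constructor
    intro q
    obtain ⟨x, hx⟩ := Quotient.exists_rep q.as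
    exact ⟨x, ⟨eqToIso (by simp [projToComponents, hx])⟩⟩
  exact Functor.IsEquivalence.mk
end

section
/- Let M be a symmetric monoidal category which is a groupoid and in which every translation functor X ⊗ − is faithful. Let π₀M be the commutative monoid of isomorphism classes of objects of M under ⊗, and Gr(π₀M) its group completion (Grothendieck group). On pairs A = (A⁺, A⁻) of objects of M, let ≈ be the equivalence relation generated by declaring A ≈ B whenever T(A,B) is nonempty. Then the assignment (A⁺, A⁻) ↦ [A⁺] − [A⁻] induces a well-defined bijection from the set of ≈-equivalence classes of pairs onto Gr(π₀M). -/
/-!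
STATEMENT 5: Let M be a symmetric monoidal category which is a groupoid with faithful
translation functors.  Let π₀M be the commutative monoid of isomorphism classes of objects
under ⊗ (here realized as `CategoryTheory.Skeleton M` with its `CommMonoid` structure) and
`Gr(π₀M)` its group completion (here realized as the localization of the commutative monoid
at the top submonoid).  Let ≈ be the equivalence relation on pairs of objects generated by
A ≈ B whenever T(A,B) is nonempty.  Then (A⁺, A⁻) ↦ [A⁺] − [A⁻] induces a well-defined
bijection from the set of ≈-classes onto Gr(π₀M).
-/

open CategoryTheory MonoidalCategory

universe v u

variable (M : Type u) [Category.{v} M] [MonoidalCategory M] [SymmetricCategory M]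

/-- The equivalence relation `≈` on pairs of objects of `M`, generated by declaring
`A ≈ B` whenever `T(A,B)` is nonempty. -/
def pairSetoid : Setoid (M × M) :=
  Relation.EqvGen.setoid (fun A B => Nonempty (TObj M A.1 A.2 B.1 B.2))

lemma toSkeleton_eq_iff {X Y : M} :
    toSkeleton X = toSkeleton Y ↔ Nonempty (X ≅ Y) := by
  constructor
  · intro h
    exact Quotient.exact (s := isIsomorphicSetoid M) h
  · intro ⟨e⟩
    exact Quotient.sound (s := isIsomorphicSetoid M) ⟨e⟩

theorem pairs_biject_with_group_completion
    (hgrp : ∀ {x y : M} (f : x ⟶ y), IsIso f)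
    (hfaith : ∀ X : M, (tensorLeft X).Faithful) :
    ∃ f : Quotient (pairSetoid M) →
        Localization (⊤ : Submonoid (Skeleton M)),
      (∀ A : M × M,
        f (Quotient.mk (pairSetoid M) A) =
          Localization.mk (toSkeleton A.1) ⟨toSkeleton A.2, Submonoid.mem_top _⟩) ∧
      Function.Bijective f := by
  classical
  set g : M × M → Localization (⊤ : Submonoid (Skeleton M)) :=
    fun A => Localization.mk (toSkeleton A.1) ⟨toSkeleton A.2, Submonoid.mem_top _⟩ with hg
  have hwd : ∀ A B : M × M, (pairSetoid M).r A B → g A = g B := by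
    intro A B h
    induction h with
    | rel A B h =>
      obtain ⟨t⟩ := h
      have e1 : toSkeleton B.1 = toSkeleton A.1 * toSkeleton t.X := by
        rw [← Skeleton.toSkeleton_tensorObj]
        exact (toSkeleton_eq_iff M).mpr ⟨(@asIso _ _ _ _ t.plus (hgrp t.plus)).symm⟩
      have e2 : toSkeleton B.2 = toSkeleton A.2 * toSkeleton t.X := by
        rw [← Skeleton.toSkeleton_tensorObj]
        exact (toSkeleton_eq_iff M).mpr ⟨(@asIso _ _ _ _ t.minus (hgrp t.minus)).symm⟩
      simp only [hg]
      rw [Localization.mk_eq_mk_iff, Localization.r_iff_exists]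
      refine ⟨1, ?_⟩
      simp only [e1, e2, Submonoid.coe_one, one_mul]
      simp [mul_comm, mul_left_comm, mul_assoc]
    | refl => rfl
    | symm _ _ _ ih => exact ih.symm
    | trans _ _ _ _ _ ih1 ih2 => exact ih1.trans ih2
  refine ⟨Quotient.lift g hwd, fun A => rfl, ?_, ?_⟩
  · -- injectivity
    intro a b
    induction a using Quotient.inductionOn with | h A =>
    induction b using Quotient.inductionOn with | h B =>
    intro h
    simp only [Quotient.lift_mk, hg, Localization.mk_eq_mk_iff,
      Localization.r_iff_exists] at h
    obtain ⟨c, hc⟩ := h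
    set C : M := Quotient.out (s := isIsomorphicSetoid M) (c : Skeleton M) with hC
    have hcout : toSkeleton C = (c : Skeleton M) :=
      Quotient.out_eq (s := isIsomorphicSetoid M) _
    -- turn the monoid equation into an isomorphism
    have key : toSkeleton (C ⊗ (B.2 ⊗ A.1)) = toSkeleton (C ⊗ (A.2 ⊗ B.1)) := by
      simp only [Skeleton.toSkeleton_tensorObj, hcout]
      exact hc
    -- step 1 : A ≈ (A.1 ⊗ Z, A.2 ⊗ Z) for Z = C ⊗ B.2
    apply Quotient.sound
    have step : ∀ (P : M × M) (Z : M),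
        (pairSetoid M).r P (P.1 ⊗ Z, P.2 ⊗ Z) :=
      fun P Z => Relation.EqvGen.rel _ _ ⟨⟨Z, 𝟙 _, 𝟙 _⟩⟩
    have hmid : (pairSetoid M).r (A.1 ⊗ (C ⊗ B.2), A.2 ⊗ (C ⊗ B.2))
        (B.1 ⊗ (C ⊗ A.2), B.2 ⊗ (C ⊗ A.2)) := by
      have h1 : toSkeleton (A.1 ⊗ (C ⊗ B.2)) = toSkeleton (B.1 ⊗ (C ⊗ A.2)) := by
        simp only [Skeleton.toSkeleton_tensorObj] at key ⊢
        calc toSkeleton A.1 * (toSkeleton C * toSkeleton B.2)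
            = toSkeleton C * (toSkeleton B.2 * toSkeleton A.1) := by
              simp [mul_comm, mul_left_comm, mul_assoc]
          _ = toSkeleton C * (toSkeleton A.2 * toSkeleton B.1) := key
          _ = toSkeleton B.1 * (toSkeleton C * toSkeleton A.2) := by
              simp [mul_comm, mul_left_comm, mul_assoc]
      have h2 : toSkeleton (A.2 ⊗ (C ⊗ B.2)) = toSkeleton (B.2 ⊗ (C ⊗ A.2)) := by
        simp only [Skeleton.toSkeleton_tensorObj]
        simp [mul_comm, mul_left_comm, mul_assoc]
      obtain ⟨e1⟩ := (toSkeleton_eq_iff M).mp h1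
      obtain ⟨e2⟩ := (toSkeleton_eq_iff M).mp h2
      exact Relation.EqvGen.rel _ _
        ⟨⟨𝟙_ M, (ρ_ _).hom ≫ e1.hom, (ρ_ _).hom ≫ e2.hom⟩⟩
    exact ((step A (C ⊗ B.2)).trans _ _ _ hmid).trans _ _ _
      ((step B (C ⊗ A.2)).symm _ _)
  · -- surjectivity
    intro x
    induction x using Localization.induction_on with | H p =>
    obtain ⟨a, b, hb⟩ := p
    refine ⟨Quotient.mk _ (Quotient.out (s := isIsomorphicSetoid M) a,
      Quotient.out (s := isIsomorphicSetoid M) b), ?_⟩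
    simp only [Quotient.lift_mk, hg]
    congr 1
    · exact Quotient.out_eq (s := isIsomorphicSetoid M) a
    · exact Subtype.ext (Quotient.out_eq (s := isIsomorphicSetoid M) b)
end

section
/- For every n ≥ 1 and every m ∈ GL_n(ℤ), the vertices diag(m, I_n) and I_{2n} of the simplicial set B(*, GL_{2n}(ℕ), GL_{2n}(ℤ)) lie in the same path component; that is, they are connected by a finite chain of 1-simplices. -/
/-!
STATEMENT 13: For every n ≥ 1 and every m ∈ GL_n(ℤ), the vertices diag(m, I_n) and I_{2n}
of the simplicial set B(*, GL_{2n}(ℕ), GL_{2n}(ℤ)) lie in the same path component, i.e. they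
are connected by a finite chain of 1-simplices.

Vertices of B(*, M, T) are the elements of T, and a 1-simplex (a, t) with a ∈ M has faces
t and a · t.  Here M = GL_{2n}(ℕ) (matrices over ℕ whose image over ℤ is invertible, acting by
left multiplication via ℕ ⊂ ℤ) and T = GL_{2n}(ℤ) (units of the ring of integer matrices).
"Connected by a finite chain of 1-simplices" is expressed by the equivalence relation
generated by t ~ a · t.
-/

/-- The "faces of a common 1-simplex" relation on the vertices `GL_{2n}(ℤ)` of
`B(*, GL_{2n}(ℕ), GL_{2n}(ℤ))`: `t₁` and `t₂` bound a 1-simplex `(a, t₁)` with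
`a ∈ GL_{2n}(ℕ)` acting by left matrix multiplication via `ℕ ⊂ ℤ`. -/
def oneSimplexRel (N : ℕ) (t₁ t₂ : (Matrix (Fin N) (Fin N) ℤ)ˣ) : Prop :=
  ∃ a : Matrix (Fin N) (Fin N) ℕ,
    IsUnit (a.map (Nat.cast : ℕ → ℤ)) ∧
    (a.map (Nat.cast : ℕ → ℤ)) * (t₁ : Matrix (Fin N) (Fin N) ℤ) =
      (t₂ : Matrix (Fin N) (Fin N) ℤ)

open Matrix

lemma oneStep {N : ℕ} (a : Matrix (Fin N) (Fin N) ℕ)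
    (h : IsUnit (a.map (Nat.cast : ℕ → ℤ)))
    (s u : (Matrix (Fin N) (Fin N) ℤ)ˣ)
    (hu : (a.map (Nat.cast : ℕ → ℤ)) * (s : Matrix (Fin N) (Fin N) ℤ) = (u : _)) :
    Relation.EqvGen (oneSimplexRel N) s u :=
  Relation.EqvGen.rel _ _ ⟨a, h, hu⟩

lemma reindex_map' {l o m n α β : Type*} (f : α → β) (e₁ : m ≃ l) (e₂ : n ≃ o)
    (M : Matrix m n α) :
    (Matrix.reindex e₁ e₂ M).map f = Matrix.reindex e₁ e₂ (M.map f) := by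
  ext i j; rfl

theorem block_diag_connected_to_identity (n : ℕ) (hn : 1 ≤ n)
    (m : (Matrix (Fin n) (Fin n) ℤ)ˣ)
    (t : (Matrix (Fin (n + n)) (Fin (n + n)) ℤ)ˣ)
    (ht : (t : Matrix (Fin (n + n)) (Fin (n + n)) ℤ) =
      Matrix.reindex finSumFinEquiv finSumFinEquiv
        (Matrix.fromBlocks (m : Matrix (Fin n) (Fin n) ℤ) 0 0 (1 : Matrix (Fin n) (Fin n) ℤ))) :
    Relation.EqvGen (oneSimplexRel (n + n)) t 1 := by

  classical
  set c : ℕ → ℤ := Nat.cast with hc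
  set M : Matrix (Fin n) (Fin n) ℤ := (m : Matrix (Fin n) (Fin n) ℤ) with hM
  set Mi : Matrix (Fin n) (Fin n) ℤ := ((m⁻¹ : _ˣ) : Matrix (Fin n) (Fin n) ℤ) with hMi
  have hMMi : M * Mi = 1 := m.mul_inv
  set P : Matrix (Fin n) (Fin n) ℕ := Matrix.of fun i j => (M i j).toNat with hP
  set Q : Matrix (Fin n) (Fin n) ℕ := Matrix.of fun i j => (-(M i j)).toNat with hQ
  have hPQ : P.map c = M + Q.map c := by
    ext i j
    simp only [Matrix.map_apply, Matrix.add_apply, hP, hQ, hc, Matrix.of_apply]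
    omega
  set X : Matrix (Fin n) (Fin n) ℤ := Mi * (Q.map c) with hXdef
  set Xp : Matrix (Fin n) (Fin n) ℕ := Matrix.of fun i j => (X i j).toNat with hXp
  set Xm : Matrix (Fin n) (Fin n) ℕ := Matrix.of fun i j => (-(X i j)).toNat with hXm
  have hXpm : Xp.map c = X + Xm.map c := by
    ext i j
    simp only [Matrix.map_apply, Matrix.add_apply, hXp, hXm, hc, Matrix.of_apply]
    omega
  have hMX : M * X = Q.map c := by
    rw [hXdef, ← mul_assoc, hMMi, one_mul]
  -- block matrices over ℕ (at the `Sum` level)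
  set a1 : Matrix (Fin n ⊕ Fin n) (Fin n ⊕ Fin n) ℕ := fromBlocks P Q 1 1 with ha1
  set a2 : Matrix (Fin n ⊕ Fin n) (Fin n ⊕ Fin n) ℕ := fromBlocks 1 0 1 1 with ha2
  set a3 : Matrix (Fin n ⊕ Fin n) (Fin n ⊕ Fin n) ℕ := fromBlocks 1 Xp 0 1 with ha3
  set a4 : Matrix (Fin n ⊕ Fin n) (Fin n ⊕ Fin n) ℕ := fromBlocks 1 Xm 0 1 with ha4
  -- their integer images
  set A1 : Matrix (Fin n ⊕ Fin n) (Fin n ⊕ Fin n) ℤ := fromBlocks (P.map c) (Q.map c) 1 1 with hA1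
  set A2 : Matrix (Fin n ⊕ Fin n) (Fin n ⊕ Fin n) ℤ := fromBlocks 1 0 1 1 with hA2
  set A3 : Matrix (Fin n ⊕ Fin n) (Fin n ⊕ Fin n) ℤ := fromBlocks 1 (Xp.map c) 0 1 with hA3
  set A4 : Matrix (Fin n ⊕ Fin n) (Fin n ⊕ Fin n) ℤ := fromBlocks 1 (Xm.map c) 0 1 with hA4
  have hone : (1 : Matrix (Fin n) (Fin n) ℕ).map c = 1 :=
    Matrix.map_one c Nat.cast_zero Nat.cast_one
  have hzero : (0 : Matrix (Fin n) (Fin n) ℕ).map c = 0 :=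
    Matrix.map_zero c Nat.cast_zero
  have hm1 : a1.map c = A1 := by rw [ha1, hA1, Matrix.fromBlocks_map, hone]
  have hm2 : a2.map c = A2 := by rw [ha2, hA2, Matrix.fromBlocks_map, hone, hzero]
  have hm3 : a3.map c = A3 := by rw [ha3, hA3, Matrix.fromBlocks_map, hone, hzero]
  have hm4 : a4.map c = A4 := by rw [ha4, hA4, Matrix.fromBlocks_map, hone, hzero]
  set Y : Matrix (Fin n ⊕ Fin n) (Fin n ⊕ Fin n) ℤ := fromBlocks M (Q.map c) 0 1 with hY
  set T0 : Matrix (Fin n ⊕ Fin n) (Fin n ⊕ Fin n) ℤ := fromBlocks M 0 0 1 with hT0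
  -- units, at the `Sum` level
  have hu2 : IsUnit A2 := by
    apply (Matrix.isUnit_iff_isUnit_det (A := _)).mpr <| Matrix.isUnit_det_of_right_inverse (B := fromBlocks 1 0 (-1) 1) ?_
    rw [hA2, Matrix.fromBlocks_multiply]
    simp [Matrix.fromBlocks_one]
  have hu3 : IsUnit A3 := by
    apply (Matrix.isUnit_iff_isUnit_det (A := _)).mpr <| Matrix.isUnit_det_of_right_inverse (B := fromBlocks 1 (-(Xp.map c)) 0 1) ?_
    rw [hA3, Matrix.fromBlocks_multiply]
    simp [Matrix.fromBlocks_one]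
  have hu4 : IsUnit A4 := by
    apply (Matrix.isUnit_iff_isUnit_det (A := _)).mpr <| Matrix.isUnit_det_of_right_inverse (B := fromBlocks 1 (-(Xm.map c)) 0 1) ?_
    rw [hA4, Matrix.fromBlocks_multiply]
    simp [Matrix.fromBlocks_one]
  have huY : IsUnit Y := by
    apply (Matrix.isUnit_iff_isUnit_det (A := _)).mpr <| Matrix.isUnit_det_of_right_inverse (B := fromBlocks Mi (-(Mi * (Q.map c))) 0 1) ?_
    rw [hY, Matrix.fromBlocks_multiply]
    have : M * -(Mi * Q.map c) + Q.map c * 1 = 0 := by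
      rw [mul_neg, ← mul_assoc, hMMi, one_mul, mul_one, neg_add_cancel]
    rw [this]
    simp [hMMi, Matrix.fromBlocks_one]
  have hYA2 : A1 = Y * A2 := by
    rw [hA1, hY, hA2, Matrix.fromBlocks_multiply]
    simp [hPQ]
  have hu1 : IsUnit A1 := by rw [hYA2]; exact huY.mul hu2
  -- the key identity
  have hKey : Y * A4 = T0 * A3 := by
    rw [hY, hA4, hT0, hA3, Matrix.fromBlocks_multiply, Matrix.fromBlocks_multiply]
    have : M * (Xp.map c) = M * (Xm.map c) + Q.map c := by
      rw [hXpm, mul_add, hMX]; exact add_comm _ _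
    simp [this]
  -- transport to the `Fin (n+n)` level
  set φ : Matrix (Fin n ⊕ Fin n) (Fin n ⊕ Fin n) ℤ ≃ₐ[ℤ] Matrix (Fin (n + n)) (Fin (n + n)) ℤ :=
    Matrix.reindexAlgEquiv ℤ ℤ finSumFinEquiv with hφ
  have hφapp : ∀ B : Matrix (Fin n ⊕ Fin n) (Fin n ⊕ Fin n) ℤ,
      φ B = Matrix.reindex finSumFinEquiv finSumFinEquiv B := fun B => by
    rw [hφ, Matrix.reindexAlgEquiv_apply]
  have hU1 : IsUnit (φ A1) := hu1.map φ
  have hU2 : IsUnit (φ A2) := hu2.map φ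
  have hU3 : IsUnit (φ A3) := hu3.map φ
  have hU4 : IsUnit (φ A4) := hu4.map φ
  have hUY : IsUnit (φ Y) := huY.map φ
  set w1 := hU1.unit with hw1
  set w2 := hU2.unit with hw2
  set w3 := hU3.unit with hw3
  set w4 := hU4.unit with hw4
  set y := hUY.unit with hwy
  -- unit-level identities
  have hyw : w1 = y * w2 := by
    apply Units.ext
    rw [Units.val_mul, hU1.unit_spec, hU2.unit_spec, hUY.unit_spec, ← _root_.map_mul φ, hYA2]
  have htval : (t : Matrix (Fin (n + n)) (Fin (n + n)) ℤ) = φ T0 := by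
    rw [ht, hφapp]
  have hKeyU : y * w4 = t * w3 := by
    apply Units.ext
    rw [Units.val_mul, Units.val_mul, hU3.unit_spec, hU4.unit_spec, hUY.unit_spec,
      htval, ← _root_.map_mul φ, ← _root_.map_mul φ, hKey]
  have hty : t = y * w4 * w3⁻¹ := by
    rw [hKeyU, mul_inv_cancel_right]
  have htfin : t = w1 * w2⁻¹ * (w4 * w3⁻¹) := by
    rw [hyw, hty]; group
  -- the ℕ matrices at the `Fin (n+n)` level
  have hbmap : ∀ a : Matrix (Fin n ⊕ Fin n) (Fin n ⊕ Fin n) ℕ,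
      (Matrix.reindex finSumFinEquiv finSumFinEquiv a).map c = φ (a.map c) := fun a => by
    rw [reindex_map', hφapp]
  set b1 := Matrix.reindex finSumFinEquiv finSumFinEquiv a1 with hb1
  set b2 := Matrix.reindex finSumFinEquiv finSumFinEquiv a2 with hb2
  set b3 := Matrix.reindex finSumFinEquiv finSumFinEquiv a3 with hb3
  set b4 := Matrix.reindex finSumFinEquiv finSumFinEquiv a4 with hb4
  have hbm1 : b1.map c = φ A1 := by rw [hb1, hbmap, hm1]
  have hbm2 : b2.map c = φ A2 := by rw [hb2, hbmap, hm2]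
  have hbm3 : b3.map c = φ A3 := by rw [hb3, hbmap, hm3]
  have hbm4 : b4.map c = φ A4 := by rw [hb4, hbmap, hm4]
  -- the chain
  have S1 : Relation.EqvGen (oneSimplexRel (n + n)) 1 w3⁻¹ := by
    refine Relation.EqvGen.symm _ _ (oneStep b3 (by rw [hbm3]; exact hU3) w3⁻¹ 1 ?_)
    rw [hbm3, ← hU3.unit_spec, ← hw3, ← Units.val_mul, mul_inv_cancel, Units.val_one]
  have S2 : Relation.EqvGen (oneSimplexRel (n + n)) w3⁻¹ (w4 * w3⁻¹) := by
    refine oneStep b4 (by rw [hbm4]; exact hU4) w3⁻¹ (w4 * w3⁻¹) ?_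
    rw [hbm4, ← hU4.unit_spec, ← hw4, ← Units.val_mul]
  have S3 : Relation.EqvGen (oneSimplexRel (n + n)) (w4 * w3⁻¹) (w2⁻¹ * (w4 * w3⁻¹)) := by
    refine Relation.EqvGen.symm _ _
      (oneStep b2 (by rw [hbm2]; exact hU2) (w2⁻¹ * (w4 * w3⁻¹)) (w4 * w3⁻¹) ?_)
    rw [hbm2, ← hU2.unit_spec, ← hw2, ← Units.val_mul, mul_inv_cancel_left]
  have S4 : Relation.EqvGen (oneSimplexRel (n + n)) (w2⁻¹ * (w4 * w3⁻¹)) t := by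
    refine oneStep b1 (by rw [hbm1]; exact hU1) (w2⁻¹ * (w4 * w3⁻¹)) t ?_
    rw [hbm1, ← hU1.unit_spec, ← hw1, ← Units.val_mul]
    congr 1
    rw [htfin]; group
  exact Relation.EqvGen.symm _ _ (((S1.trans _ _ _ S2).trans _ _ _ S3).trans _ _ _ S4)
end
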